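/- Let p be an odd prime and m, k positive integers such that m/gcd(m,k) is odd. Then the map x ↦ x^(p^k + 1) on the finite field F_{p^m} is two-to-one on nonzero elements: every nonzero element in its image has exactly two preimages. -/

import Mathlib

private lemma gcd_two_mul (m k : ℕ) (hm : 0 < m) (h : Odd (m / Nat.gcd m k)) :
    Nat.gcd m (2 * k) = Nat.gcd m k := by
  set g := Nat.gcd m k with hg
  set G := Nat.gcd m (2 * k) with hG
  have hgpos : 0 < g := Nat.gcd_pos_of_pos_left k hm
  have h1 : g ∣ G := Nat.dvd_gcd (Nat.gcd_dvd_left _ _)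
    ((Nat.gcd_dvd_right m k).trans (dvd_mul_left k 2))
  have h2 : G ∣ 2 * g := by
    have : G ∣ Nat.gcd (2 * m) (2 * k) :=
      Nat.dvd_gcd ((Nat.gcd_dvd_left _ _).trans (dvd_mul_left m 2)) (Nat.gcd_dvd_right _ _)
    simpa [Nat.gcd_mul_left] using this
  obtain ⟨t, ht⟩ := h1
  have ht2 : t ∣ 2 := by
    have : g * t ∣ g * 2 := by rw [← ht]; simpa [mul_comm] using h2
    exact (Nat.mul_dvd_mul_iff_left hgpos).mp this
  rcases (Nat.dvd_prime Nat.prime_two).mp ht2 with h1' | h2'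
  · exact ht.trans (by rw [h1', mul_one])
  · exfalso
    have h2gm : g * 2 ∣ m := by rw [← h2', ← ht]; exact Nat.gcd_dvd_left _ _
    obtain ⟨s, hs⟩ := h2gm
    have : m / g = 2 * s := by
      rw [hs, mul_assoc, Nat.mul_div_cancel_left _ hgpos]
    rw [this] at h
    exact (Nat.not_odd_iff_even.mpr ⟨s, by ring⟩) h

private lemma key_gcd (p m k : ℕ) (hp : p.Prime) (hodd : Odd p)
    (hm : 0 < m) (hk : 0 < k) (h : Odd (m / Nat.gcd m k)) :
    Nat.gcd (p ^ k + 1) (p ^ m - 1) = 2 := by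
  set d := Nat.gcd (p ^ k + 1) (p ^ m - 1) with hd
  have hp1 : 1 ≤ p ^ k := Nat.one_le_pow _ _ hp.pos
  have hp1m : 1 ≤ p ^ m := Nat.one_le_pow _ _ hp.pos
  have h2d : 2 ∣ d := by
    refine Nat.dvd_gcd ?_ ?_
    · exact (Odd.add_one (hodd.pow)).two_dvd
    · exact (Nat.Odd.sub_odd (hodd.pow) odd_one).two_dvd
  have hdpos : 0 < d := Nat.gcd_pos_of_pos_left _ (Nat.succ_pos _)
  have hd2 : d ∣ 2 := by
    -- work in ZMod d
    haveI : NeZero d := ⟨hdpos.ne'⟩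
    have hdvd1 : d ∣ p ^ m - 1 := Nat.gcd_dvd_right _ _
    have hdvd2 : d ∣ p ^ (2 * k) - 1 := by
      have : p ^ (2 * k) - 1 = (p ^ k + 1) * (p ^ k - 1) := by
        have h2k : p ^ (2 * k) = (p ^ k) ^ 2 := by rw [two_mul, pow_add, sq]
        rw [h2k]
        simpa using Nat.sq_sub_sq (p ^ k) 1
      rw [this]
      exact dvd_mul_of_dvd_left (Nat.gcd_dvd_left _ _) _
    have hcast : ∀ n : ℕ, 1 ≤ p ^ n → d ∣ p ^ n - 1 → (p : ZMod d) ^ n = 1 := by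
      intro n h1 hdd
      have : ((p ^ n - 1 : ℕ) : ZMod d) = 0 := (ZMod.natCast_eq_zero_iff _ _).mpr hdd
      rw [Nat.cast_sub h1] at this
      push_cast at this
      linear_combination this
    have h1 : (p : ZMod d) ^ m = 1 := hcast m hp1m hdvd1
    have h2 : (p : ZMod d) ^ (2 * k) = 1 := hcast _ (Nat.one_le_pow _ _ hp.pos) hdvd2
    have ho1 : orderOf (p : ZMod d) ∣ m := orderOf_dvd_of_pow_eq_one h1
    have ho2 : orderOf (p : ZMod d) ∣ 2 * k := orderOf_dvd_of_pow_eq_one h2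
    have ho : orderOf (p : ZMod d) ∣ Nat.gcd m k := by
      rw [← gcd_two_mul m k hm h]
      exact Nat.dvd_gcd ho1 ho2
    have hpk : (p : ZMod d) ^ k = 1 :=
      orderOf_dvd_iff_pow_eq_one.mp (ho.trans (Nat.gcd_dvd_right m k))
    -- hence d ∣ p^k - 1
    have hdk : d ∣ p ^ k - 1 := by
      have : ((p ^ k - 1 : ℕ) : ZMod d) = 0 := by
        rw [Nat.cast_sub hp1]
        push_cast
        rw [hpk]; ring
      exact (ZMod.natCast_eq_zero_iff _ _).mp this
    have : d ∣ (p ^ k + 1) - (p ^ k - 1) := Nat.dvd_sub (Nat.gcd_dvd_left _ _) hdk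
    have h2eq : (p ^ k + 1) - (p ^ k - 1) = 2 := by omega
    rwa [h2eq] at this
  exact Nat.dvd_antisymm hd2 h2d

theorem stmt_1 (p m k : ℕ) (hp : p.Prime) (hodd : Odd p)
    (hm : 0 < m) (hk : 0 < k) (h : Odd (m / Nat.gcd m k))
    (F : Type*) [Field F] [Fintype F] (hF : Fintype.card F = p ^ m) :
    ∀ c : F, c ≠ 0 → (∃ x : F, x ^ (p ^ k + 1) = c) →
      {x : F | x ^ (p ^ k + 1) = c}.ncard = 2 := by
  intro c hc ⟨x0, hx0⟩
  set e := p ^ k + 1 with he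
  have heven : Even e := Odd.add_one hodd.pow
  have hx0ne : x0 ≠ 0 := by
    intro h0; rw [h0, zero_pow (by positivity)] at hx0; exact hc hx0.symm
  -- char p
  have hchar : ringChar F = p := by
    have hcp : (ringChar F).Prime := CharP.char_is_prime F _
    obtain ⟨n, hn⟩ := FiniteField.card F (ringChar F)
    have : ringChar F ∣ p ^ m := by
      rw [← hF, hn.2]; exact dvd_pow_self _ (by exact_mod_cast n.pos.ne')
    exact (Nat.prime_dvd_prime_iff_eq hcp hp).mp (hcp.dvd_of_dvd_pow this)
  have h2ne : (2 : F) ≠ 0 := by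
    have : ¬ ringChar F ∣ 2 := by
      rw [hchar]
      intro hpd
      have := (Nat.prime_dvd_prime_iff_eq hp Nat.prime_two).mp hpd
      rw [this] at hodd
      exact (Nat.not_odd_iff_even.mpr even_two) hodd
    exact_mod_cast mt (ringChar.dvd (R := F)) (by simpa using this)
  have hx0neg : x0 ≠ -x0 := by
    intro hxx
    apply hx0ne
    have : (2 : F) * x0 = 0 := by linear_combination hxx
    exact (mul_eq_zero.mp this).resolve_left h2ne
  have hgcd := key_gcd p m k hp hodd hm hk h
  have hset : {x : F | x ^ e = c} = {x0, -x0} := by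
    ext x
    simp only [Set.mem_setOf_eq, Set.mem_insert_iff, Set.mem_singleton_iff]
    constructor
    · intro hx
      have hxne : x ≠ 0 := by
        intro h0; rw [h0, zero_pow (by positivity)] at hx; exact hc hx.symm
      set t := x * x0⁻¹ with htdef
      have htne : t ≠ 0 := mul_ne_zero hxne (inv_ne_zero hx0ne)
      have hte : t ^ e = 1 := by
        rw [htdef, mul_pow, inv_pow, hx, hx0]
        exact mul_inv_cancel₀ hc
      have htq : t ^ (p ^ m - 1) = 1 := by
        rw [← hF]; exact FiniteField.pow_card_sub_one_eq_one t htne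
      have hto : orderOf t ∣ 2 := by
        rw [← hgcd]
        exact Nat.dvd_gcd (orderOf_dvd_of_pow_eq_one hte) (orderOf_dvd_of_pow_eq_one htq)
      have ht2 : t ^ 2 = 1 := orderOf_dvd_iff_pow_eq_one.mp hto
      have : (t - 1) * (t + 1) = 0 := by linear_combination ht2
      have hx_eq : x = t * x0 := by
        rw [htdef, mul_assoc, inv_mul_cancel₀ hx0ne, mul_one]
      rcases mul_eq_zero.mp this with h1 | h1
      · left; rw [hx_eq, sub_eq_zero.mp h1, one_mul]
      · right
        have : t = -1 := by linear_combination h1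
        rw [hx_eq, this]; ring
    · intro hx
      rcases hx with h1 | h1
      · rw [h1]; exact hx0
      · rw [h1, heven.neg_pow]; exact hx0
  rw [hset]
  exact Set.ncard_pair hx0neg
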